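/- Assume the following form of the subspace theorem: for real algebraic numbers $\beta_1,\dots,\beta_n$ with $\{1,\beta_1,\dots,\beta_n\}$ linearly independent over $\mathbb{Q}$ and any $\delta>0$, the set of positive integers $q$ with $q^{1+\delta}\,\mathrm{dist}_{\mathbb{Z}}(q\beta_1)\cdots\mathrm{dist}_{\mathbb{Z}}(q\beta_n) < 1$ is finite. Let $a_1,\dots,a_n$ be distinct square-free positive integers, all $> 1$, and set $\beta_i = \sqrt{a_i}$, $\delta = \frac{1}{3n}$. Then there exists $Q_0 \in \mathbb{N}$ such that for all real $Q \geq Q_0$, every positive integer $q \leq Q^{n-\delta}$ satisfies $\max_i \mathrm{dist}_{\mathbb{Z}}(q\beta_i) > 1/Q^{1+\delta}$. -/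

import Mathlib

open Real Finset

/-- Distance of a real number to the nearest integer. -/
noncomputable def distZ (x : ℝ) : ℝ := |x - round x|

namespace SqrtLI

/-- The subfield of `ℝ` generated by the square roots of the elements of `S`. -/
noncomputable def K (S : Finset ℕ) : Subfield ℝ :=
  Subfield.closure ((fun p : ℕ => Real.sqrt p) '' (S : Set ℕ))

lemma sqrt_mem_K {S : Finset ℕ} {p : ℕ} (hp : p ∈ S) : Real.sqrt p ∈ K S :=
  Subfield.subset_closure ⟨p, by simpa using hp, rfl⟩

lemma natCast_mem_K (S : Finset ℕ) (m : ℕ) : ((m : ℝ)) ∈ K S := by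
  have := SubfieldClass.ratCast_mem (K S) (m : ℚ)
  rwa [Rat.cast_natCast] at this

lemma sqrt_nat_mul (m n : ℕ) : Real.sqrt ((m * n : ℕ) : ℝ) = Real.sqrt m * Real.sqrt n := by
  push_cast
  exact Real.sqrt_mul (Nat.cast_nonneg m) n

lemma sqrt_mem_of_factors (S : Finset ℕ) : ∀ n : ℕ, Squarefree n →
    (∀ q : ℕ, q.Prime → q ∣ n → q ∈ S) → Real.sqrt n ∈ K S := by
  intro n
  induction n using Nat.strong_induction_on with
  | _ n ih =>
    intro hsf hfac
    rcases eq_or_ne n 1 with rfl | hn1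
    · simpa using Subfield.one_mem (K S)
    · obtain ⟨q, hq, m, rfl⟩ := Nat.exists_prime_and_dvd hn1
      have hm0 : 0 < m := by
        rcases Nat.eq_zero_or_pos m with h | h
        · rw [h, mul_zero] at hsf; exact absurd hsf not_squarefree_zero
        · exact h
      rw [sqrt_nat_mul]
      refine Subfield.mul_mem _ (sqrt_mem_K (hfac q hq ⟨m, rfl⟩)) (ih m ?_ ?_ ?_)
      · exact (lt_mul_iff_one_lt_left hm0).mpr hq.one_lt
      · exact hsf.squarefree_of_dvd ⟨q, mul_comm q m⟩
      · exact fun r hr hrm => hfac r hr (hrm.mul_left q)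

lemma mem_quad {F : Subfield ℝ} {α : ℝ} (hα2 : α ^ 2 ∈ F) (hα : α ∉ F) {x : ℝ}
    (hx : x ∈ Subfield.closure ((F : Set ℝ) ∪ {α})) :
    ∃ a ∈ F, ∃ b ∈ F, x = a + b * α := by
  induction hx using Subfield.closure_induction with
  | mem x hx =>
    rcases hx with hx | hx
    · exact ⟨x, hx, 0, F.zero_mem, by ring⟩
    · exact ⟨0, F.zero_mem, 1, F.one_mem, by rw [Set.mem_singleton_iff.mp hx]; ring⟩
  | one => exact ⟨1, F.one_mem, 0, F.zero_mem, by ring⟩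
  | add x y hx hy ihx ihy =>
    obtain ⟨a, ha, b, hb, rfl⟩ := ihx
    obtain ⟨c, hc, d, hd, rfl⟩ := ihy
    exact ⟨a + c, F.add_mem ha hc, b + d, F.add_mem hb hd, by ring⟩
  | neg x hx ihx =>
    obtain ⟨a, ha, b, hb, rfl⟩ := ihx
    exact ⟨-a, F.neg_mem ha, -b, F.neg_mem hb, by ring⟩
  | mul x y hx hy ihx ihy =>
    obtain ⟨a, ha, b, hb, rfl⟩ := ihx
    obtain ⟨c, hc, d, hd, rfl⟩ := ihy
    exact ⟨a * c + b * d * α ^ 2,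
      F.add_mem (F.mul_mem ha hc) (F.mul_mem (F.mul_mem hb hd) hα2),
      a * d + b * c, F.add_mem (F.mul_mem ha hd) (F.mul_mem hb hc), by ring⟩
  | inv x hx ihx =>
    obtain ⟨a, ha, b, hb, rfl⟩ := ihx
    by_cases hz : a + b * α = 0
    · exact ⟨0, F.zero_mem, 0, F.zero_mem, by rw [hz]; simp⟩
    · set D : ℝ := a ^ 2 - b ^ 2 * α ^ 2 with hD
      have hDmem : D ∈ F := F.sub_mem (by simpa [sq] using F.mul_mem ha ha)
        (F.mul_mem (by simpa [sq] using F.mul_mem hb hb) hα2)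
      have hD0 : D ≠ 0 := by
        intro h0
        have hfac : (a + b * α) * (a - b * α) = 0 := by rw [← h0]; ring
        have h2 : a - b * α = 0 := by
          rcases mul_eq_zero.mp hfac with h | h
          · exact absurd h hz
          · exact h
        rcases eq_or_ne b 0 with rfl | hb0
        · apply hz; rw [show a = 0 by linarith [h2]]; ring
        · exact hα (by
            have : α = a / b := by field_simp; linarith [h2]
            rw [this]; exact F.div_mem ha hb)
      refine ⟨a / D, F.div_mem ha hDmem, -(b / D), F.neg_mem (F.div_mem hb hDmem), ?_⟩
      refine inv_eq_of_mul_eq_one_right ?_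
      rw [hD] at hD0 ⊢
      field_simp
      ring

lemma K_insert_le (p : ℕ) (T : Finset ℕ) :
    K (insert p T) ≤ Subfield.closure ((K T : Set ℝ) ∪ {Real.sqrt p}) := by
  apply Subfield.closure_le.mpr
  rintro x ⟨q, hq, rfl⟩
  rcases Finset.mem_insert.mp (by simpa using hq) with rfl | hq'
  · exact Subfield.subset_closure (Or.inr rfl)
  · exact Subfield.subset_closure (Or.inl (sqrt_mem_K hq'))

lemma sqrt_not_mem : ∀ S : Finset ℕ, (∀ p ∈ S, p.Prime) → ∀ n : ℕ, Squarefree n →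
    (∃ q : ℕ, q.Prime ∧ q ∣ n ∧ q ∉ S) → Real.sqrt n ∉ K S := by
  intro S
  induction S using Finset.induction_on with
  | empty =>
    rintro - n hsf ⟨q, hq, hqn, -⟩ hmem
    have hle : K ∅ ≤ (Rat.castHom ℝ).fieldRange := Subfield.closure_le.mpr (by simp)
    obtain ⟨r, hr⟩ := hle hmem
    have hirr : Irrational (Real.sqrt n) := by
      rw [irrational_sqrt_natCast_iff]
      rintro ⟨k, hk⟩
      have hk1 : IsUnit k := hsf k (by rw [hk])
      have : n = 1 := by rw [hk, Nat.isUnit_iff.mp hk1]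
      exact hq.ne_one (Nat.dvd_one.mp (this ▸ hqn))
    exact hirr ⟨r, hr⟩
  | @insert p T hpT ih =>
    rintro hprime n hsf ⟨q, hq, hqn, hqS⟩ hmem
    have hp : p.Prime := hprime p (Finset.mem_insert_self p T)
    have hT : ∀ r ∈ T, Nat.Prime r := fun r hr => hprime r (Finset.mem_insert_of_mem hr)
    have hqp : q ≠ p := fun h => hqS (h ▸ Finset.mem_insert_self p T)
    have hqT : q ∉ T := fun h => hqS (Finset.mem_insert_of_mem h)
    have hppos : (0:ℝ) < Real.sqrt p := Real.sqrt_pos.mpr (by exact_mod_cast hp.pos)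
    have hsp2 : Real.sqrt p ^ 2 = ((p:ℕ):ℝ) := Real.sq_sqrt (Nat.cast_nonneg p)
    have hspT : Real.sqrt p ∉ K T := ih hT p hp.squarefree ⟨p, hp, dvd_rfl, hpT⟩
    have hp2mem : Real.sqrt p ^ 2 ∈ K T := by rw [hsp2]; exact natCast_mem_K T p
    obtain ⟨x, hx, y, hy, hxy⟩ := mem_quad hp2mem hspT (K_insert_le p T hmem)
    have hn2 : ((n:ℕ):ℝ) = x^2 + y^2 * p + 2*x*y*Real.sqrt p := by
      have h1 : Real.sqrt n ^ 2 = ((n:ℕ):ℝ) := Real.sq_sqrt (Nat.cast_nonneg n)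
      rw [hxy] at h1
      rw [← h1]
      have := hsp2
      nlinarith [hsp2]
    rcases eq_or_ne y 0 with rfl | hy0
    · -- √n = x ∈ K T
      exact ih hT n hsf ⟨q, hq, hqn, hqT⟩ (by rw [hxy]; simpa using hx)
    rcases eq_or_ne x 0 with rfl | hx0
    · -- √n = y √p
      by_cases hpn : p ∣ n
      · obtain ⟨m, rfl⟩ := hpn
        have hmsq : Real.sqrt m = y := by
          have h1 : Real.sqrt p * Real.sqrt m = y * Real.sqrt p := by
            rw [← sqrt_nat_mul]; rw [hxy]; ring
          field_simp at h1
          exact mul_right_cancel₀ (ne_of_gt hppos) (by rw [h1])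
        have hqm : q ∣ m := ((Nat.Prime.dvd_mul hq).mp hqn).resolve_left
          (fun h => hqp (Nat.prime_dvd_prime_iff_eq hq hp |>.mp h))
        exact ih hT m (hsf.squarefree_of_dvd ⟨p, mul_comm p m⟩) ⟨q, hq, hqm, hqT⟩
          (hmsq ▸ hy)
      · have hpn' : Real.sqrt ((p * n : ℕ) : ℝ) ∈ K T := by
          rw [sqrt_nat_mul, hxy]
          have h2 : Real.sqrt p * (0 + y * Real.sqrt p) = y * ((p:ℕ):ℝ) := by
            linear_combination y * hsp2
          rw [h2]
          exact Subfield.mul_mem _ hy (natCast_mem_K T p)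
        have hco : Nat.Coprime p n := (Nat.Prime.coprime_iff_not_dvd hp).mpr hpn
        have hsfpn : Squarefree (p * n) := (Nat.squarefree_mul hco).mpr ⟨hp.squarefree, hsf⟩
        exact ih hT (p * n) hsfpn ⟨q, hq, hqn.mul_left p, hqT⟩ hpn'
    · -- both nonzero: √p ∈ K T
      apply hspT
      have hpe : Real.sqrt p = (((n:ℕ):ℝ) - x^2 - y^2*p) / (2*x*y) := by
        field_simp
        linarith [hn2]
      rw [hpe]
      exact Subfield.div_mem _
        (Subfield.sub_mem _ (Subfield.sub_mem _ (natCast_mem_K T n)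
          (by simpa [sq] using Subfield.mul_mem _ hx hx))
          (Subfield.mul_mem _ (by simpa [sq] using Subfield.mul_mem _ hy hy) (natCast_mem_K T p)))
        (by
          refine Subfield.mul_mem _ (Subfield.mul_mem _ ?_ hx) hy
          have := SubfieldClass.ratCast_mem (K T) (2:ℚ); simpa using this)

lemma li : ∀ S : Finset ℕ, (∀ p ∈ S, p.Prime) → ∀ t : Finset ℕ,
    (∀ d ∈ t, Squarefree d ∧ ∀ q : ℕ, q.Prime → q ∣ d → q ∈ S) →
    ∀ c : ℕ → ℚ, ∑ d ∈ t, (c d : ℝ) * Real.sqrt d = 0 → ∀ d ∈ t, c d = 0 := by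
  intro S
  induction S using Finset.induction_on with
  | empty =>
    intro _ t ht c hc d hd
    have hone : ∀ e ∈ t, e = 1 := by
      intro e he
      by_contra he1
      obtain ⟨q, hq, hqe⟩ := Nat.exists_prime_and_dvd he1
      exact absurd ((ht e he).2 q hq hqe) (Finset.notMem_empty q)
    have ht1 : t = {1} := Finset.eq_singleton_iff_unique_mem.mpr
      ⟨(hone d hd) ▸ hd, hone⟩
    rw [ht1, Finset.sum_singleton] at hc
    simp only [Nat.cast_one, Real.sqrt_one, mul_one] at hc
    rw [hone d hd]
    exact_mod_cast hc
  | @insert p T hpT ih =>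
    intro hprime t ht c hc d hd
    have hp : p.Prime := hprime p (Finset.mem_insert_self p T)
    have hT : ∀ r ∈ T, Nat.Prime r := fun r hr => hprime r (Finset.mem_insert_of_mem hr)
    have hppos : (0:ℝ) < Real.sqrt p := Real.sqrt_pos.mpr (by exact_mod_cast hp.pos)
    set t₁ : Finset ℕ := t.filter (fun e => ¬ p ∣ e) with ht₁
    set t₂ : Finset ℕ := t.filter (fun e => p ∣ e) with ht₂
    -- facts about t₁ elements
    have htt₁ : ∀ e ∈ t₁, Squarefree e ∧ ∀ q : ℕ, q.Prime → q ∣ e → q ∈ T := by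
      intro e he
      obtain ⟨het, hnpe⟩ := Finset.mem_filter.mp he
      refine ⟨(ht e het).1, fun q hq hqe => ?_⟩
      rcases Finset.mem_insert.mp ((ht e het).2 q hq hqe) with rfl | h
      · exact absurd hqe hnpe
      · exact h
    -- facts about t₂ quotients
    have htt₂ : ∀ e ∈ t₂, Squarefree (e / p) ∧ ∀ q : ℕ, q.Prime → q ∣ e / p → q ∈ T := by
      intro e he
      obtain ⟨het, hpe⟩ := Finset.mem_filter.mp he
      have hdvd : e / p ∣ e := ⟨p, (Nat.div_mul_cancel hpe).symm⟩
      refine ⟨(ht e het).1.squarefree_of_dvd hdvd, fun q hq hqe => ?_⟩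
      rcases Finset.mem_insert.mp ((ht e het).2 q hq (hqe.trans hdvd)) with rfl | h
      · exfalso
        obtain ⟨k, hk⟩ := hqe
        have : q * q ∣ e := by
          rw [← Nat.div_mul_cancel hpe, hk]
          exact ⟨k, by ring⟩
        exact hq.ne_one (Nat.isUnit_iff.mp ((ht e het).1 q this))
      · exact h
    set X : ℝ := ∑ e ∈ t₁, (c e : ℝ) * Real.sqrt e with hX
    set Y : ℝ := ∑ e ∈ t₂, (c e : ℝ) * Real.sqrt (e / p : ℕ) with hY
    have hXmem : X ∈ K T := by
      refine Subfield.sum_mem _ fun e he => Subfield.mul_mem _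
        (SubfieldClass.ratCast_mem _ _) ?_
      exact sqrt_mem_of_factors T e (htt₁ e he).1 (htt₁ e he).2
    have hYmem : Y ∈ K T := by
      refine Subfield.sum_mem _ fun e he => Subfield.mul_mem _
        (SubfieldClass.ratCast_mem _ _) ?_
      exact sqrt_mem_of_factors T (e / p) (htt₂ e he).1 (htt₂ e he).2
    have hsplit : X + Real.sqrt p * Y = 0 := by
      rw [hX, hY, Finset.mul_sum]
      rw [← hc, ← Finset.sum_filter_add_sum_filter_not t (fun e => p ∣ e) 
        (fun e => (c e : ℝ) * Real.sqrt e)]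
      rw [add_comm]
      congr 1
      refine Finset.sum_congr rfl fun e he => ?_
      have hpe : p ∣ e := (Finset.mem_filter.mp he).2
      have : Real.sqrt e = Real.sqrt p * Real.sqrt (e / p : ℕ) := by
        rw [← sqrt_nat_mul, Nat.mul_div_cancel' hpe]
      rw [this]; ring
    have hspT : Real.sqrt p ∉ K T := sqrt_not_mem T hT p hp.squarefree ⟨p, hp, dvd_rfl, hpT⟩
    have hY0 : Y = 0 := by
      by_contra hY0
      apply hspT
      have : Real.sqrt p = -X / Y := by
        rw [eq_div_iff hY0]; linarith [hsplit]
      rw [this]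
      exact Subfield.div_mem _ (Subfield.neg_mem _ hXmem) hYmem
    have hX0 : X = 0 := by rw [hY0, mul_zero, add_zero] at hsplit; exact hsplit
    by_cases hpd : p ∣ d
    · -- d ∈ t₂
      have hd₂ : d ∈ t₂ := Finset.mem_filter.mpr ⟨hd, hpd⟩
      set t₂' : Finset ℕ := t₂.image (· / p) with ht₂'
      have hinj : ∀ x ∈ t₂, ∀ y ∈ t₂, x / p = y / p → x = y := by
        intro x hx y hy hxy
        have hpx : p ∣ x := (Finset.mem_filter.mp hx).2
        have hpy : p ∣ y := (Finset.mem_filter.mp hy).2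
        rw [← Nat.div_mul_cancel hpx, ← Nat.div_mul_cancel hpy, hxy]
      have hYimg : ∑ e ∈ t₂', ((c (p * e) : ℝ)) * Real.sqrt e = Y := by
        rw [ht₂', Finset.sum_image hinj]
        refine Finset.sum_congr rfl fun e he => ?_
        rw [Nat.mul_div_cancel' (Finset.mem_filter.mp he).2]
      have hcond : ∀ e ∈ t₂', Squarefree e ∧ ∀ q : ℕ, q.Prime → q ∣ e → q ∈ T := by
        intro e he
        obtain ⟨x, hx, rfl⟩ := Finset.mem_image.mp he
        exact htt₂ x hx
      have := ih hT t₂' hcond (fun e => c (p * e)) (by rw [hYimg, hY0]) (d / p)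
        (Finset.mem_image_of_mem _ hd₂)
      rwa [Nat.mul_div_cancel' hpd] at this
    · exact ih hT t₁ htt₁ c hX0 d (Finset.mem_filter.mpr ⟨hd, hpd⟩)

lemma sqrt_isAlgebraic (m : ℕ) : IsAlgebraic ℚ (Real.sqrt m) := by
  refine ⟨Polynomial.X ^ 2 - Polynomial.C (m : ℚ), Polynomial.X_pow_sub_C_ne_zero two_pos _, ?_⟩
  simp [Real.sq_sqrt (Nat.cast_nonneg m)]

lemma cons_li (n : ℕ) (a : Fin n → ℕ) (ha : ∀ i, 1 < a i) (hsf : ∀ i, Squarefree (a i))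
    (hinj : Function.Injective a) :
    LinearIndependent ℚ (Fin.cons 1 (fun i => Real.sqrt (a i)) : Fin (n + 1) → ℝ) := by
  rw [Fintype.linearIndependent_iff]
  intro g hg
  set b : Fin (n + 1) → ℕ := Fin.cons 1 a with hb
  have hbinj : Function.Injective b :=
    Fin.cons_injective_iff.mpr ⟨fun ⟨i, hi⟩ => ((ha i).ne' hi).elim, hinj⟩
  have hsqb : ∀ i, Real.sqrt (b i) = (Fin.cons 1 (fun i => Real.sqrt (a i)) : Fin (n+1) → ℝ) i := by
    intro i
    refine Fin.cases ?_ (fun j => ?_) i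
    · simp [hb]
    · simp [hb]
  set N : ℕ := ∏ i, a i with hN
  have hN0 : N ≠ 0 := by
    rw [hN]
    exact Finset.prod_ne_zero_iff.mpr fun i _ => (Nat.lt_of_lt_of_le Nat.zero_lt_one (le_of_lt (ha i))).ne'
  set S : Finset ℕ := N.primeFactors with hS
  have hSprime : ∀ p ∈ S, p.Prime := fun p hp => Nat.prime_of_mem_primeFactors hp
  classical
  set c : ℕ → ℚ := fun e => if h : ∃ i, b i = e then g h.choose else 0 with hcdef
  have hcb : ∀ i, c (b i) = g i := by
    intro i
    have h : ∃ j, b j = b i := ⟨i, rfl⟩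
    rw [hcdef]
    simp only [dif_pos h]
    rw [hbinj h.choose_spec]
  set t : Finset ℕ := Finset.image b Finset.univ with htdef
  have hcond : ∀ e ∈ t, Squarefree e ∧ ∀ q : ℕ, q.Prime → q ∣ e → q ∈ S := by
    intro e he
    obtain ⟨i, -, rfl⟩ := Finset.mem_image.mp he
    refine Fin.cases ?_ (fun j => ?_) i
    · exact ⟨by simp [hb], fun q hq hq1 => absurd (Nat.dvd_one.mp (by simpa [hb] using hq1))
        hq.ne_one⟩
    · refine ⟨by simpa [hb] using hsf j, fun q hq hqa => ?_⟩
      refine Nat.mem_primeFactors.mpr ⟨hq, ?_, hN0⟩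
      exact dvd_trans (by simpa [hb] using hqa) (Finset.dvd_prod_of_mem a (Finset.mem_univ j))
  have hsum : ∑ e ∈ t, (c e : ℝ) * Real.sqrt e = 0 := by
    rw [htdef, Finset.sum_image (fun x _ y _ h => hbinj h)]
    rw [← hg]
    refine Finset.sum_congr rfl fun i _ => ?_
    rw [hcb, hsqb, Rat.smul_def]
  intro i
  rw [← hcb i]
  exact li S hSprime t hcond c hsum (b i) (Finset.mem_image_of_mem b (Finset.mem_univ i))

lemma distZ_pos_of_irrational {x : ℝ} (hx : Irrational x) : 0 < distZ x := by
  rw [distZ, abs_pos, sub_ne_zero]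
  exact hx.ne_int (round x)

end SqrtLI

/-- Assuming the subspace theorem, for distinct square-free radicands `> 1`
there is a threshold `Q₀` beyond which no small `q` approximates all `√aᵢ`
well. -/
theorem no_good_approximation_beyond_threshold
    (subspace : ∀ (m : ℕ) (β : Fin m → ℝ), (∀ i, IsAlgebraic ℚ (β i)) →
      LinearIndependent ℚ (Fin.cons 1 β : Fin (m + 1) → ℝ) →
      ∀ δ : ℝ, 0 < δ →
        {q : ℕ | 0 < q ∧ (q : ℝ) ^ (1 + δ) * ∏ i, distZ ((q : ℝ) * β i) < 1}.Finite)
    (n : ℕ) (hn : 1 ≤ n) (a : Fin n → ℕ) (ha : ∀ i, 1 < a i)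
    (hsf : ∀ i, Squarefree (a i)) (hinj : Function.Injective a) :
    ∃ Q₀ : ℕ, ∀ Q : ℝ, (Q₀ : ℝ) ≤ Q → ∀ q : ℕ, 0 < q →
      (q : ℝ) ≤ Q ^ ((n : ℝ) - 1 / (3 * n)) →
      ∃ i, 1 / Q ^ ((1 : ℝ) + 1 / (3 * n)) < distZ ((q : ℝ) * Real.sqrt (a i)) := by
  have hn0 : (0:ℝ) < (n:ℝ) := by exact_mod_cast hn
  set δ : ℝ := 1 / (3 * (n:ℝ)) with hδdef
  have hδ : 0 < δ := by positivity
  have hn1 : (1:ℝ) ≤ (n:ℝ) := by exact_mod_cast hn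
  have hδ1 : δ < 1 := by
    rw [hδdef, div_lt_one (by positivity)]
    nlinarith
  have hfin := subspace n (fun i => Real.sqrt (a i)) (fun i => SqrtLI.sqrt_isAlgebraic (a i))
    (SqrtLI.cons_li n a ha hsf hinj) δ hδ
  obtain ⟨M, hM⟩ := hfin.bddAbove
  simp only [upperBounds, Set.mem_setOf_eq] at hM
  -- i₀ and ε
  set i₀ : Fin n := ⟨0, hn⟩ with hi₀
  have hirr : Irrational (Real.sqrt (a i₀)) := by
    rw [irrational_sqrt_natCast_iff]
    rintro ⟨k, hk⟩
    have hk1 : k = 1 := Nat.isUnit_iff.mp (hsf i₀ k (by rw [hk]))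
    rw [hk1, mul_one] at hk
    exact (ha i₀).ne' hk
  have hne : (Finset.Icc 1 (M + 1)).Nonempty := ⟨1, Finset.mem_Icc.mpr ⟨le_refl 1, le_add_self⟩⟩
  set ε : ℝ := (Finset.Icc 1 (M + 1)).inf' hne (fun k => distZ ((k:ℝ) * Real.sqrt (a i₀)))
    with hεdef
  have hε : 0 < ε := by
    rw [hεdef, Finset.lt_inf'_iff]
    intro k hk
    have hk1 : 1 ≤ k := (Finset.mem_Icc.mp hk).1
    exact SqrtLI.distZ_pos_of_irrational (hirr.natCast_mul (by omega))
  refine ⟨max 2 (⌈1/ε⌉₊ + 1), fun Q hQ q hq hqQ => ?_⟩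
  have hQ2 : (2:ℝ) ≤ Q := le_trans (by exact_mod_cast le_max_left 2 (⌈1/ε⌉₊ + 1)) hQ
  have hQ1 : (1:ℝ) < Q := by linarith
  have hQ0 : (0:ℝ) < Q := by linarith
  have hQε : 1 / Q < ε := by
    rw [div_lt_iff₀ hQ0]
    have h1 : (1:ℝ)/ε ≤ (⌈1/ε⌉₊:ℝ) := Nat.le_ceil _
    have h2 : ((⌈1/ε⌉₊:ℝ) + 1) ≤ Q := by
      refine le_trans ?_ hQ
      have := le_max_right 2 (⌈1/ε⌉₊ + 1)
      exact_mod_cast Nat.cast_le.mpr this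
    have : 1/ε < Q := by linarith
    calc (1:ℝ) = ε * (1/ε) := by field_simp
    _ < ε * Q := by exact mul_lt_mul_of_pos_left this hε
  by_contra hcon
  push_neg at hcon
  -- q is in the finite exceptional set
  have hq1pow : (0:ℝ) < Q ^ ((1:ℝ) + δ) := Real.rpow_pos_of_pos hQ0 _
  have hall : ∀ i, distZ ((q:ℝ) * Real.sqrt (a i)) ≤ 1 / Q ^ ((1:ℝ) + δ) := hcon
  have hmem : q ∈ {q : ℕ | 0 < q ∧ (q : ℝ) ^ (1 + δ) *
      ∏ i, distZ ((q : ℝ) * Real.sqrt (a i)) < 1} := by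
    refine ⟨hq, ?_⟩
    have hprod : ∏ i, distZ ((q:ℝ) * Real.sqrt (a i)) ≤ (1 / Q ^ ((1:ℝ) + δ)) ^ n := by
      calc ∏ i, distZ ((q:ℝ) * Real.sqrt (a i))
          ≤ ∏ _i : Fin n, (1 / Q ^ ((1:ℝ) + δ)) :=
            Finset.prod_le_prod (fun i _ => abs_nonneg _) (fun i _ => hall i)
        _ = (1 / Q ^ ((1:ℝ) + δ)) ^ n := by
            rw [Finset.prod_const, Finset.card_univ, Fintype.card_fin]
    have hqpow : (q:ℝ) ^ ((1:ℝ) + δ) ≤ Q ^ (((n:ℝ) - δ) * (1 + δ)) := by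
      have h1 : (q:ℝ) ^ ((1:ℝ) + δ) ≤ (Q ^ ((n:ℝ) - δ)) ^ ((1:ℝ) + δ) :=
        Real.rpow_le_rpow (Nat.cast_nonneg q) hqQ (by linarith)
      rwa [← Real.rpow_mul hQ0.le] at h1
    have hRHS : (1 / Q ^ ((1:ℝ) + δ)) ^ n = Q ^ (-(((1:ℝ) + δ) * n)) := by
      rw [one_div, ← Real.rpow_neg hQ0.le, ← Real.rpow_natCast (Q ^ (-((1:ℝ) + δ))) n,
        ← Real.rpow_mul hQ0.le, neg_mul]
    calc (q:ℝ) ^ (1 + δ) * ∏ i, distZ ((q:ℝ) * Real.sqrt (a i))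
        ≤ Q ^ (((n:ℝ) - δ) * (1 + δ)) * (1 / Q ^ ((1:ℝ) + δ)) ^ n := by
          refine mul_le_mul hqpow hprod (Finset.prod_nonneg fun i _ => abs_nonneg _) ?_
          positivity
      _ = Q ^ ((((n:ℝ) - δ) * (1 + δ)) + (-(((1:ℝ) + δ) * n))) := by
          rw [hRHS, ← Real.rpow_add hQ0]
      _ < 1 := by
          refine Real.rpow_lt_one_of_one_lt_of_neg hQ1 ?_
          nlinarith
  have hqM : q ≤ M := hM hmem
  have hqIcc : q ∈ Finset.Icc 1 (M + 1) := Finset.mem_Icc.mpr ⟨hq, by omega⟩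
  have hεle : ε ≤ distZ ((q:ℝ) * Real.sqrt (a i₀)) := Finset.inf'_le _ hqIcc
  have hlt : distZ ((q:ℝ) * Real.sqrt (a i₀)) ≤ 1 / Q ^ ((1:ℝ) + δ) := hall i₀
  have hQQ : Q ≤ Q ^ ((1:ℝ) + δ) := by
    have := Real.rpow_le_rpow_of_exponent_le hQ1.le (by linarith : (1:ℝ) ≤ 1 + δ)
    rwa [Real.rpow_one] at this
  have : 1 / Q ^ ((1:ℝ) + δ) ≤ 1 / Q := by
    apply one_div_le_one_div_of_le hQ0 hQQ
  linarith
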